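/- Let B be an n×n complex matrix which is regular (admits a cyclic vector) and symmetric (Bᵀ = B). If g is a complex orthogonal matrix (gᵀg = 1) commuting with B (gB = Bg), then g² = 1. -/

import Mathlib

open Matrix

/-- If `B` is a regular (admitting a cyclic vector) symmetric complex matrix and `g` is a
complex orthogonal matrix commuting with `B`, then `g ^ 2 = 1`. -/
theorem orth_commute_regular_symm_sq_eq_one (n : ℕ) (B g : Matrix (Fin n) (Fin n) ℂ)
    (hreg : ∃ v : Fin n → ℂ,
      LinearIndependent ℂ (fun i : Fin n => (B ^ (i : ℕ)) *ᵥ v) ∧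
      Submodule.span ℂ (Set.range fun i : Fin n => (B ^ (i : ℕ)) *ᵥ v) = ⊤)
    (hsymm : Bᵀ = B)
    (horth : gᵀ * g = 1)
    (hcomm : g * B = B * g) :
    g ^ 2 = 1 := by
  obtain ⟨v, _hli, hspan⟩ := hreg
  have hmem : g *ᵥ v ∈ Submodule.span ℂ
      (Set.range fun i : Fin n => (B ^ (i : ℕ)) *ᵥ v) := by
    rw [hspan]; exact Submodule.mem_top
  rw [Submodule.mem_span_range_iff_exists_fun ℂ] at hmem
  obtain ⟨c, hc⟩ := hmem
  set M : Matrix (Fin n) (Fin n) ℂ := ∑ i : Fin n, c i • B ^ (i : ℕ) with hM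
  have hcommM : ∀ k : ℕ, g * B ^ k = B ^ k * g := fun k =>
    ((Commute.pow_right (hcomm : Commute g B) k))
  have hMv : M *ᵥ v = g *ᵥ v := by
    calc M *ᵥ v = Matrix.toLin' M v := rfl
      _ = ∑ i : Fin n, c i • (B ^ (i : ℕ) *ᵥ v) := by
          rw [hM, map_sum]
          simp only [LinearMap.sum_apply, map_smul, LinearMap.smul_apply, Matrix.toLin'_apply]
      _ = g *ᵥ v := hc
  have hBM : ∀ k : ℕ, B ^ k * M = M * B ^ k := by
    intro k
    simp only [hM, Finset.mul_sum, Finset.sum_mul, Matrix.mul_smul, Matrix.smul_mul]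
    exact Finset.sum_congr rfl fun i _ => by rw [← pow_add, ← pow_add, Nat.add_comm]
  have hgM : g = M := by
    have heq : g.mulVecLin = M.mulVecLin := by
      apply LinearMap.ext_on hspan
      rintro x ⟨i, rfl⟩
      simp only [Matrix.mulVecLin_apply]
      rw [Matrix.mulVec_mulVec, hcommM, ← Matrix.mulVec_mulVec, ← hMv,
        Matrix.mulVec_mulVec, Matrix.mulVec_mulVec, hBM]
    ext i j
    have := congrFun (congrArg (⇑) heq) (Pi.single j 1)
    have h2 := congrFun this i
    simpa [Matrix.mulVec_single_one] using h2
  have hMsymm : Mᵀ = M := by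
    rw [hM, Matrix.transpose_sum]
    exact Finset.sum_congr rfl fun i _ => by
      rw [Matrix.transpose_smul, Matrix.transpose_pow, hsymm]
  have hgsymm : gᵀ = g := by rw [hgM, hMsymm]
  rw [pow_two]
  nth_rewrite 1 [← hgsymm]
  exact horth
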